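/- Suppose x is a binary word, a ∈ {0,1}, and the word xa (x with letter a appended) is a valid Fibonacci representation. Then [x] = ⌊([xa]+2)/α⌋ − 1, where α = (1+√5)/2. -/

import Mathlib

/-- The Fibonacci (Zeckendorf) value of a binary word written msd-first:
`[x₁⋯x_ℓ] = Σ_j x_j · F_{ℓ−j+2}`. -/
def fibVal : List Bool → ℕ
  | [] => 0
  | a :: rest => (if a then Nat.fib (rest.length + 2) else 0) + fibVal rest

/-- A binary word is a valid Fibonacci representation if it has no factor `11`. -/
def ValidFib (w : List Bool) : Prop :=
  w.Chain' (fun a b => a = false ∨ b = false)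

open Real goldenRatio

/-- lsd-first valuation with starting weight `Nat.fib k`. -/
noncomputable def valR : List Bool → ℕ → ℝ
  | [], _ => 0
  | b :: t, k => (if b then (Nat.fib k : ℝ) else 0) + valR t (k + 1)

lemma valR_append (b : Bool) : ∀ (l : List Bool) (k : ℕ),
    valR (l ++ [b]) k = valR l k + (if b then (Nat.fib (k + l.length) : ℝ) else 0)
  | [], k => by simp [valR]
  | c :: t, k => by
    show (if c then (Nat.fib k : ℝ) else 0) + valR (t ++ [b]) (k + 1) = _
    rw [valR_append b t (k + 1)]
    have : k + 1 + t.length = k + (c :: t).length := by simp; omega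
    rw [this, valR]
    ring

lemma fibVal_eq_valR : ∀ w : List Bool, (fibVal w : ℝ) = valR w.reverse 2
  | [] => by simp [fibVal, valR]
  | a :: rest => by
    rw [fibVal, List.reverse_cons, valR_append, List.length_reverse]
    push_cast
    rw [fibVal_eq_valR rest, Nat.add_comm 2 rest.length]
    ring

lemma gold_conj_facts : (0:ℝ) < -ψ ∧ -ψ < 1 ∧ (-ψ)^2 = 1 - (-ψ) := by
  refine ⟨by linarith [goldenConj_neg], by linarith [neg_one_lt_goldenConj], ?_⟩
  have := goldenConj_sq
  nlinarith [this]

lemma sBound : ∀ (l : List Bool),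
    l.Chain' (fun a b => a = false ∨ b = false) → ∀ k : ℕ,
      -(-ψ) ^ (k + 1) < (-1 : ℝ) ^ (k + 1) * (valR l (k + 2) - φ * valR l (k + 1)) ∧
      (-1 : ℝ) ^ (k + 1) * (valR l (k + 2) - φ * valR l (k + 1)) < (-ψ) ^ k
  | [], _, k => by
    obtain ⟨hg0, hg1, hgs⟩ := gold_conj_facts
    simp only [valR, mul_zero, sub_zero]
    constructor
    · simpa using (pow_pos hg0 (k + 1))
    · positivity
  | false :: t, h, k => by
    obtain ⟨hg0, hg1, hgs⟩ := gold_conj_facts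
    obtain ⟨ih1, ih2⟩ := sBound t h.tail (k + 1)
    have hv2 : valR (false :: t) (k + 2) = valR t (k + 3) := by simp [valR]
    have hv1 : valR (false :: t) (k + 1) = valR t (k + 2) := by simp [valR]
    rw [hv1, hv2]
    have hsgn : ((-1 : ℝ)) ^ (k + 1 + 1) = -(-1 : ℝ) ^ (k + 1) := by ring
    rw [hsgn] at ih1 ih2
    have hlt : (-ψ) ^ (k + 1 + 1) < (-ψ) ^ k :=
      pow_lt_pow_right_of_lt_one₀ hg0 hg1 (by omega)
    have hlt2 : (-ψ) ^ (k + 1) < (-ψ) ^ k :=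
      pow_lt_pow_right_of_lt_one₀ hg0 hg1 (by omega)
    constructor <;> nlinarith [ih1, ih2]
  | [true], _, k => by
    obtain ⟨hg0, hg1, hgs⟩ := gold_conj_facts
    simp only [valR, if_true, add_zero]
    have hb := fib_succ_sub_goldenRatio_mul_fib (k + 1)
    have : (-1 : ℝ) ^ (k + 1) * ((Nat.fib (k + 2) : ℝ) - φ * (Nat.fib (k + 1))) =
        (-ψ) ^ (k + 1) := by
      rw [show ((Nat.fib (k+2) : ℝ)) - φ * (Nat.fib (k+1)) = ψ ^ (k+1) from hb]
      rw [neg_pow ψ (k + 1)]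
    rw [this]
    have hlt : (-ψ) ^ (k + 1) < (-ψ) ^ k := pow_lt_pow_right_of_lt_one₀ hg0 hg1 (by omega)
    constructor
    · have := pow_pos hg0 (k + 1); linarith
    · exact hlt
  | true :: false :: t, h, k => by
    obtain ⟨hg0, hg1, hgs⟩ := gold_conj_facts
    obtain ⟨ih1, ih2⟩ := sBound t h.tail.tail (k + 2)
    have hb := fib_succ_sub_goldenRatio_mul_fib (k + 1)
    have hv2 : valR (true :: false :: t) (k + 2) = (Nat.fib (k + 2) : ℝ) + valR t (k + 4) := by
      simp [valR]
    have hv1 : valR (true :: false :: t) (k + 1) = (Nat.fib (k + 1) : ℝ) + valR t (k + 3) := by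
      simp [valR]
    rw [hv1, hv2]
    have hpsi : (-1 : ℝ) ^ (k + 1) * (ψ ^ (k + 1)) = (-ψ) ^ (k + 1) := by
      rw [neg_pow ψ (k + 1)]
    have hsgn : ((-1 : ℝ)) ^ (k + 2 + 1) = (-1 : ℝ) ^ (k + 1) := by ring
    rw [hsgn] at ih1 ih2
    have key : (-ψ) ^ (k + 1) + (-ψ) ^ (k + 2) = (-ψ) ^ k := by
      have : (-ψ) ^ (k + 1) + (-ψ) ^ (k + 2) = (-ψ) ^ k * ((-ψ) + (-ψ) ^ 2) := by ring
      rw [this, hgs]; ring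
    have hexp : (-1 : ℝ) ^ (k + 1) *
        (((Nat.fib (k + 2) : ℝ) + valR t (k + 4)) -
          φ * ((Nat.fib (k + 1) : ℝ) + valR t (k + 3))) =
        (-ψ) ^ (k + 1) +
          (-1 : ℝ) ^ (k + 1) * (valR t (k + 4) - φ * valR t (k + 3)) := by
      rw [← hpsi, ← hb]; ring
    rw [hexp]
    have hlt : (-ψ) ^ (k + 2 + 1) < (-ψ) ^ (k + 1) :=
      pow_lt_pow_right_of_lt_one₀ hg0 hg1 (by omega)
    have hpos := pow_pos hg0 (k + 1)
    constructor <;> nlinarith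
  | true :: true :: t, h, _ => by
    rcases List.isChain_cons_cons.1 h with ⟨hc, -⟩
    simp at hc

theorem fibVal_eq_floor (x : List Bool) (a : Bool) (h : ValidFib (x ++ [a])) :
    (fibVal x : ℤ) =
      ⌊((fibVal (x ++ [a]) : ℝ) + 2) / ((1 + Real.sqrt 5) / 2)⌋ - 1 := by
  obtain ⟨hg0, hg1, hgs⟩ := gold_conj_facts
  have hgold : (1 + Real.sqrt 5) / 2 = φ := rfl
  have hphig : φ = 1 + (-ψ) := by
    have := goldenRatio_add_goldenConj; linarith
  have hx : x.Chain' (fun a b => a = false ∨ b = false) :=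
    (List.isChain_append.1 h).1
  have hxr : x.reverse.Chain' (fun a b => a = false ∨ b = false) := by
    refine List.isChain_reverse.2 ?_
    exact hx.imp (fun a b hab => hab.symm)
  have hM : (fibVal x : ℝ) = valR x.reverse 2 := fibVal_eq_valR x
  have hN : (fibVal (x ++ [a]) : ℝ) = (if a then 1 else 0) + valR x.reverse 3 := by
    rw [fibVal_eq_valR]
    simp only [List.reverse_append, List.reverse_singleton, List.singleton_append, valR]
    norm_num [Nat.fib]
  have hS1 := sBound x.reverse hxr 1
  norm_num at hS1
  have hS2 : a = true → valR x.reverse 3 - φ * valR x.reverse 2 < (-ψ) ^ 3 := by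
    intro ha
    subst ha
    match hxe : x.reverse with
    | [] =>
      simp only [valR, mul_zero, sub_zero]
      positivity
    | b :: t =>
      have hb : b = false := by
        have h3 := (List.isChain_append.1 h).2.2
        have hhead : x.reverse.head? = some b := by rw [hxe]; rfl
        rw [List.head?_reverse] at hhead
        have := h3 b hhead true rfl
        simpa using this
      subst hb
      have hxr' := hxr
      rw [hxe] at hxr'
      have hbd := (sBound t hxr'.tail 2).1
      norm_num at hbd
      have hv1 : valR (false :: t) 2 = valR t 3 := by norm_num [valR]
      have hv2 : valR (false :: t) 3 = valR t 4 := by norm_num [valR]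
      rw [hv1, hv2]
      linarith
  have h3 : (-ψ : ℝ) ^ 3 = 2 * (-ψ) - 1 := by nlinarith
  have hfloor : ⌊((fibVal (x ++ [a]) : ℝ) + 2) / ((1 + Real.sqrt 5) / 2)⌋ =
      (fibVal x : ℤ) + 1 := by
    rw [hgold, Int.floor_eq_iff]
    push_cast
    constructor
    · rw [le_div_iff₀ goldenRatio_pos, hN, hM, hphig]
      have h1 := hS1.1
      rcases a with _ | _ <;> norm_num <;> nlinarith [h1, hgs, hg0]
    · rw [div_lt_iff₀ goldenRatio_pos, hN, hM, hphig]
      rcases a with _ | _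
      · have h2 := hS1.2
        norm_num
        nlinarith [h2, hgs, hg0]
      · have h2 := hS2 rfl
        norm_num
        nlinarith [h2, h3, hg0]
  rw [hfloor]
  ring
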